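/- Let (S_n)_{n≥1} be the jump times of a Poisson process with intensity 1, let (σ_n)_{n≥1} be i.i.d. standard exponential random variables independent of the Poisson process, and set U_n = S_n + σ_n. Let Θ be a standard exponential random variable independent of everything else, and define τ = inf{t ≥ 0 : t + Σ_{U_n ≤ t} 1 ≥ Θ}. Then P(τ = t) = 0 for every deterministic t ≥ 0, yet for each n, P(τ = U_n | S_n, σ_n, τ ≥ U_n) = 1 - e^{-1}. -/

import Mathlib

open MeasureTheory ProbabilityTheory Real Set

namespace AnnouncedAux

open Classical in
lemma tsum_ite_eq_card {p : ℕ → Prop} [DecidablePred p] (h : (setOf p).Finite) :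
    ∑' m, (if p m then (1:ℝ) else 0) = h.toFinset.card := by
  rw [tsum_eq_sum (s := h.toFinset) (f := fun m => if p m then (1:ℝ) else 0)
      (fun b hb => if_neg (fun hp => hb (h.mem_toFinset.2 hp)))]
  rw [Finset.sum_congr rfl (fun m hm => if_pos (show p m from h.mem_toFinset.1 hm))]
  simp

lemma tsum_nonneg_eq_toReal {f : ℕ → ℝ} (hf : ∀ m, 0 ≤ f m) :
    ∑' m, f m = (∑' m, ENNReal.ofReal (f m)).toReal := by
  by_cases h : Summable f
  · rw [← ENNReal.ofReal_tsum_of_nonneg hf h, ENNReal.toReal_ofReal (tsum_nonneg hf)]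
  · rw [tsum_eq_zero_of_not_summable h]
    by_cases h2 : (∑' m, ENNReal.ofReal (f m)) = ⊤
    · rw [h2]; simp
    · exfalso
      apply h
      have := ENNReal.summable_toReal h2
      refine this.congr (fun m => ?_)
      exact ENNReal.toReal_ofReal (hf m)

noncomputable def lam (u : ℕ → ℝ) (t : ℝ) : ℝ :=
  t + ∑' m, (if u m ≤ t then (1:ℝ) else 0)

def Aset (u : ℕ → ℝ) (θ : ℝ) : Set ℝ := {t : ℝ | 0 ≤ t ∧ θ ≤ lam u t}

variable {u : ℕ → ℝ} {θ : ℝ}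

lemma lam_eq {t : ℝ} (hfin : ({m | u m ≤ t}).Finite) :
    lam u t = t + (hfin.toFinset.card : ℝ) := by
  rw [lam, tsum_ite_eq_card hfin]
  rfl

lemma le_lam (t : ℝ) : t ≤ lam u t :=
  le_add_of_nonneg_right (tsum_nonneg (fun m => by positivity))

lemma Aset_nonempty : (Aset u θ).Nonempty :=
  ⟨max θ 0, le_max_right _ _, le_trans (le_max_left _ _) (le_lam _)⟩

lemma Aset_bddBelow : BddBelow (Aset u θ) := ⟨0, fun t ht => ht.1⟩

lemma sInf_Aset_nonneg : 0 ≤ sInf (Aset u θ) :=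
  le_csInf Aset_nonempty (fun t ht => ht.1)

/-- If `θ < t + #{m | u m < t}` with `t > 0`, there is `v ∈ [0, t)` with `θ ≤ lam u v`. -/
lemma exists_mem_lt {t : ℝ} (ht : 0 < t) (hfin' : ({m | u m < t}).Finite)
    (hlt : θ < t + (hfin'.toFinset.card : ℝ)) :
    ∃ v, 0 ≤ v ∧ v < t ∧ θ ≤ lam u v := by
  classical
  set F := hfin'.toFinset with hF
  set c : ℝ := (F.card : ℝ) with hc
  set L : ℝ := (insert (0:ℝ) (F.image u)).max' (Finset.insert_nonempty _ _) with hL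
  have hL0 : (0:ℝ) ≤ L := Finset.le_max' _ _ (Finset.mem_insert_self _ _)
  have hLt : L < t := by
    rw [hL]
    apply (Finset.max'_lt_iff _ _).2
    intro y hy
    rcases Finset.mem_insert.1 hy with h | h
    · simpa [h] using ht
    · rcases Finset.mem_image.1 h with ⟨m, hm, rfl⟩
      exact (hfin'.mem_toFinset.1 hm)
  have hLub : ∀ m, u m < t → u m ≤ L :=
    fun m hm => Finset.le_max' _ _
      (Finset.mem_insert_of_mem (Finset.mem_image_of_mem u (hfin'.mem_toFinset.2 hm)))
  set v : ℝ := max L (θ - c) with hv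
  have hv0 : 0 ≤ v := le_trans hL0 (le_max_left _ _)
  have hvt : v < t := max_lt hLt (by linarith)
  have hset : {m | u m ≤ v} = {m | u m < t} := by
    ext m
    constructor
    · exact fun h => lt_of_le_of_lt h hvt
    · exact fun h => le_trans (hLub m h) (le_max_left _ _)
  have hfv : ({m | u m ≤ v}).Finite := hset ▸ hfin'
  have hFeq : hfv.toFinset = hfin'.toFinset := by
    ext m
    simp only [Set.Finite.mem_toFinset]
    rw [hset]
  have hcard : (hfv.toFinset.card : ℝ) = c := by rw [hFeq]
  refine ⟨v, hv0, hvt, ?_⟩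
  rw [lam_eq hfv, hcard]
  have : θ - c ≤ v := le_max_right _ _
  linarith


lemma sInf_mem_Aset (hfin : ∀ t : ℝ, ({m | u m ≤ t}).Finite) :
    sInf (Aset u θ) ∈ Aset u θ := by
  classical
  set τ := sInf (Aset u θ) with hτ
  refine ⟨sInf_Aset_nonneg, ?_⟩
  set F : Finset ℕ := ((hfin (τ+1)).toFinset.filter (fun m => τ < u m)) with hF
  set δ : ℝ := if h : F.Nonempty then
      min 1 ((F.image (fun m => u m - τ)).min' (h.image (fun m => u m - τ))) else 1 with hδdef
  have hδpos : 0 < δ := by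
    rw [hδdef]
    split_ifs with h
    · apply lt_min one_pos
      obtain ⟨m, hm, hEq⟩ := Finset.mem_image.1 (Finset.min'_mem _ (h.image (fun m => u m - τ)))
      have : τ < u m := (Finset.mem_filter.1 hm).2
      rw [← hEq]; linarith
    · exact one_pos
  have hδ1 : δ ≤ 1 := by
    rw [hδdef]; split_ifs with h
    · exact min_le_left _ _
    · exact le_rfl
  have hgap : ∀ w, τ < w → w < τ + δ → {m | u m ≤ w} = {m | u m ≤ τ} := by
    intro w hw1 hw2
    ext m
    simp only [Set.mem_setOf_eq]
    constructor
    · intro hmw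
      by_contra hmt
      push_neg at hmt
      have hm1 : u m ≤ τ + 1 := le_trans hmw (by linarith)
      have hmF : m ∈ F := Finset.mem_filter.2 ⟨(hfin (τ+1)).mem_toFinset.2 hm1, hmt⟩
      have hδle : δ ≤ u m - τ := by
        rw [hδdef, dif_pos ⟨m, hmF⟩]
        exact le_trans (min_le_right _ _) (Finset.min'_le _ _ (Finset.mem_image_of_mem _ hmF))
      linarith
    · intro h; exact le_trans h hw1.le
  have key : ∀ ε : ℝ, 0 < ε → ε < δ → θ ≤ τ + (((hfin τ).toFinset.card : ℕ) : ℝ) + ε := by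
    intro ε hε hεδ
    have hlt : sInf (Aset u θ) < τ + ε := by rw [← hτ]; linarith
    obtain ⟨x, hxA, hxlt⟩ := exists_lt_of_csInf_lt Aset_nonempty hlt
    have hτx : τ ≤ x := csInf_le Aset_bddBelow hxA
    rcases eq_or_lt_of_le hτx with hEq | hLt
    · have h2 := hxA.2
      rw [← hEq, lam_eq (hfin τ)] at h2
      linarith
    · have hxs : {m | u m ≤ x} = {m | u m ≤ τ} := hgap x hLt (by linarith)
      have hfx : ({m | u m ≤ x}).Finite := hfin x
      have hFeq : hfx.toFinset = (hfin τ).toFinset := by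
        ext m; simp only [Set.Finite.mem_toFinset]; rw [hxs]
      have h2 := hxA.2
      rw [lam_eq hfx, hFeq] at h2
      linarith
  rw [lam_eq (hfin τ)]
  by_contra hcon
  push_neg at hcon
  set c : ℝ := (((hfin τ).toFinset.card : ℕ) : ℝ) with hcdef
  have hεpos : 0 < min (δ/2) ((θ - (τ + c))/2) := lt_min (by linarith) (by linarith)
  have hεδ : min (δ/2) ((θ - (τ + c))/2) < δ := lt_of_le_of_lt (min_le_left _ _) (by linarith)
  have := key _ hεpos hεδ
  have h1 : min (δ/2) ((θ - (τ + c))/2) ≤ (θ - (τ + c))/2 := min_le_right _ _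
  linarith


lemma ge_iff (hfin : ∀ t : ℝ, ({m | u m ≤ t}).Finite) {n : ℕ} (hposn : 0 < u n)
    (hfn : ({m | u m < u n}).Finite) :
    (u n ≤ sInf (Aset u θ)) ↔ u n + (hfn.toFinset.card : ℝ) ≤ θ := by
  constructor
  · intro h
    by_contra hcon
    push_neg at hcon
    obtain ⟨v, hv0, hvlt, hvlam⟩ := exists_mem_lt hposn hfn hcon
    have : sInf (Aset u θ) ≤ v := csInf_le Aset_bddBelow ⟨hv0, hvlam⟩
    linarith
  · intro h
    apply le_csInf Aset_nonempty
    intro x hx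
    by_contra hcon
    push_neg at hcon
    have hsub : {m | u m ≤ x} ⊆ {m | u m < u n} := fun m hm => lt_of_le_of_lt hm hcon
    have hcard : ((hfin x).toFinset.card : ℝ) ≤ (hfn.toFinset.card : ℝ) := by
      have : (hfin x).toFinset ⊆ hfn.toFinset := by
        intro m hm
        rw [Set.Finite.mem_toFinset] at *
        exact hsub hm
      exact_mod_cast Finset.card_le_card this
    have h2 := hx.2
    rw [lam_eq (hfin x)] at h2
    linarith

lemma lam_at_jump (hfin : ∀ t : ℝ, ({m | u m ≤ t}).Finite) {n : ℕ}
    (hdist : ∀ m, m ≠ n → u m ≠ u n) (hfn : ({m | u m < u n}).Finite) :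
    lam u (u n) = u n + (hfn.toFinset.card : ℝ) + 1 := by
  classical
  have hset : {m | u m ≤ u n} = insert n {m | u m < u n} := by
    ext m
    simp only [Set.mem_setOf_eq, Set.mem_insert_iff]
    constructor
    · intro h
      rcases eq_or_ne m n with h' | h'
      · exact Or.inl h'
      · exact Or.inr (lt_of_le_of_ne h (hdist m h'))
    · rintro (rfl | h)
      · exact le_rfl
      · exact h.le
  have hfe := hfin (u n)
  have hFeq : hfe.toFinset = insert n hfn.toFinset := by
    ext m
    simp only [Set.Finite.mem_toFinset, Finset.mem_insert]
    rw [show (m ∈ {m | u m ≤ u n}) = (u m ≤ u n) from rfl] at *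
    constructor
    · intro h
      have : m ∈ insert n {m | u m < u n} := hset ▸ h
      simpa using this
    · intro h
      have : m ∈ insert n {m | u m < u n} := by simpa using h
      rw [← hset] at this
      exact this
  rw [lam_eq hfe, hFeq, Finset.card_insert_of_notMem (by simp [Set.Finite.mem_toFinset])]
  push_cast; ring

lemma eq_iff (hfin : ∀ t : ℝ, ({m | u m ≤ t}).Finite) {n : ℕ} (hposn : 0 < u n)
    (hdist : ∀ m, m ≠ n → u m ≠ u n) (hfn : ({m | u m < u n}).Finite) :
    (sInf (Aset u θ) = u n) ↔
      (u n + (hfn.toFinset.card : ℝ) ≤ θ ∧ θ ≤ u n + (hfn.toFinset.card : ℝ) + 1) := by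
  constructor
  · intro h
    refine ⟨(ge_iff hfin hposn hfn).1 h.ge, ?_⟩
    have hmem := sInf_mem_Aset (θ := θ) hfin
    have h2 := hmem.2
    rw [h, lam_at_jump hfin hdist hfn] at h2
    linarith
  · rintro ⟨h1, h2⟩
    have hge : u n ≤ sInf (Aset u θ) := (ge_iff hfin hposn hfn).2 h1
    have hle : sInf (Aset u θ) ≤ u n := by
      apply csInf_le Aset_bddBelow
      refine ⟨hposn.le, ?_⟩
      rw [lam_at_jump hfin hdist hfn]
      linarith
    linarith

lemma ne_fixed (hfin : ∀ t : ℝ, ({m | u m ≤ t}).Finite) (hposall : ∀ m, 0 < u m)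
    (hθ : 0 < θ) {t : ℝ} (ht : 0 ≤ t) (hne : ∀ m, u m ≠ t) (hne2 : θ ≠ lam u t) :
    sInf (Aset u θ) ≠ t := by
  intro hEq
  have hmem := sInf_mem_Aset (θ := θ) hfin
  have hθle : θ ≤ lam u t := by rw [← hEq]; exact hmem.2
  have hθlt : θ < lam u t := lt_of_le_of_ne hθle hne2
  rcases eq_or_lt_of_le ht with h0 | h0
  · have hset : {m | u m ≤ t} = ∅ := by
      ext m
      simp only [Set.mem_setOf_eq, Set.mem_empty_iff_false, iff_false, not_le, ← h0]
      exact hposall m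
    have hF0 : (hfin t).toFinset = ∅ := by
      simp [Set.Finite.toFinset_eq_empty, hset]
    have hlam : lam u t = t := by
      rw [lam_eq (hfin t), hF0]
      simp
    rw [hlam, ← h0] at hθlt
    linarith
  · have hsub : ({m | u m < t}).Finite := (hfin t).subset (fun m (hm : u m < t) => (le_of_lt hm : u m ≤ t))
    have hFeq : (hfin t).toFinset = hsub.toFinset := by
      ext m
      simp only [Set.Finite.mem_toFinset, Set.mem_setOf_eq]
      exact ⟨fun h => lt_of_le_of_ne h (hne m), fun h => h.le⟩
    rw [lam_eq (hfin t), hFeq] at hθlt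
    obtain ⟨v, hv0, hvlt, hvlam⟩ := exists_mem_lt h0 hsub hθlt
    have : sInf (Aset u θ) ≤ v := csInf_le Aset_bddBelow ⟨hv0, hvlam⟩
    linarith


open ENNReal in
lemma measurable_tsum_ind {Ω : Type*} {m' : MeasurableSpace Ω} {p : ℕ → Ω → Prop}
    [∀ m ω, Decidable (p m ω)]
    (hp : ∀ m, MeasurableSet[m'] {ω | p m ω}) :
    Measurable[m'] (fun ω => ∑' m, if p m ω then (1:ℝ) else 0) := by
  have heq : (fun ω => ∑' m, if p m ω then (1:ℝ) else 0)
      = fun ω => (∑' m, if p m ω then (1:ℝ≥0∞) else 0).toReal := by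
    funext ω
    rw [tsum_nonneg_eq_toReal (fun m => by positivity)]
    congr 1
    apply tsum_congr
    intro m
    split_ifs <;> simp
  rw [heq]
  apply Measurable.ennreal_toReal
  apply Measurable.ennreal_tsum
  intro m
  exact Measurable.ite (hp m) measurable_const measurable_const

/-- If `Y` is independent of `X` and the law of `X` has no atoms, then `Y = X` is null. -/
lemma measure_eq_null_of_indep {Ω : Type*} [m0 : MeasurableSpace Ω] {P : Measure Ω}
    [IsProbabilityMeasure P] {X Y : Ω → ℝ} (h : IndepFun Y X P) (hX : Measurable X) (hY : Measurable Y)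
    {ν : Measure ℝ} [SFinite ν] (hν : P.map X = ν)
    (hatom : ∀ y : ℝ, ν {y} = 0) : P {ω | Y ω = X ω} = 0 := by
  have hmap : P.map (fun ω => (Y ω, X ω)) = (P.map Y).prod (P.map X) :=
    (indepFun_iff_map_prod_eq_prod_map_map hY.aemeasurable hX.aemeasurable).1 h
  rw [hν] at hmap
  have hD : MeasurableSet {p : ℝ × ℝ | p.1 = p.2} :=
    measurableSet_eq_fun measurable_fst measurable_snd
  have h1 : P {ω | Y ω = X ω} = ((P.map Y).prod ν) {p : ℝ × ℝ | p.1 = p.2} := by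
    rw [← hmap, Measure.map_apply (hY.prodMk hX) hD]
    rfl
  rw [h1, Measure.prod_apply hD]
  have h2 : ∀ y : ℝ, ν (Prod.mk y ⁻¹' {p : ℝ × ℝ | p.1 = p.2}) = 0 := by
    intro y
    have : (Prod.mk y ⁻¹' {p : ℝ × ℝ | p.1 = p.2}) = {y} := by
      ext x; simp [eq_comm]
    rw [this]; exact hatom y
  simp only [h2]
  simp [hatom]

lemma measure_pair_mem_eq_lintegral {Ω : Type*} [m0 : MeasurableSpace Ω] {P : Measure Ω}
    [IsProbabilityMeasure P] {α : Type*} [MeasurableSpace α] {W : Ω → α} {X : Ω → ℝ}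
    (h : IndepFun W X P) (hW : Measurable W) (hX : Measurable X)
    {ν : Measure ℝ} [SFinite ν] (hν : P.map X = ν)
    {C : Set (α × ℝ)} (hC : MeasurableSet C) :
    P {ω | (W ω, X ω) ∈ C} = ∫⁻ ω, ν (Prod.mk (W ω) ⁻¹' C) ∂P := by
  have hmap : P.map (fun ω => (W ω, X ω)) = (P.map W).prod ν := by
    rw [← hν]
    exact (indepFun_iff_map_prod_eq_prod_map_map hW.aemeasurable hX.aemeasurable).1 h
  have h1 : P {ω | (W ω, X ω) ∈ C} = (P.map (fun ω => (W ω, X ω))) C := by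
    rw [Measure.map_apply (hW.prodMk hX) hC]
    rfl
  rw [h1, hmap, Measure.prod_apply hC, ← lintegral_map (measurable_measure_prodMk_left hC) hW]

section NuFacts

open ProbabilityTheory ENNReal

noncomputable def nu : Measure ℝ := expMeasure 1

instance : IsProbabilityMeasure nu := isProbabilityMeasure_expMeasure one_pos

lemma nu_Iic (x : ℝ) : nu (Iic x) = ENNReal.ofReal (if 0 ≤ x then 1 - Real.exp (-x) else 0) := by
  have h1 : nu (Iic x) = ∫⁻ y in Iic x, exponentialPDF 1 y := by
    rw [nu, expMeasure, gammaMeasure, withDensity_apply _ measurableSet_Iic]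
    rfl
  rw [h1, lintegral_exponentialPDF_eq_antiDeriv one_pos x]
  norm_num

lemma nu_singleton (x : ℝ) : nu {x} = 0 := by
  rw [nu, expMeasure, gammaMeasure]
  exact (withDensity_absolutelyContinuous _ _) (Real.volume_singleton)

lemma nu_Iio (x : ℝ) : nu (Iio x) = nu (Iic x) := by
  apply le_antisymm (measure_mono Iio_subset_Iic_self)
  calc nu (Iic x) = nu (Iio x ∪ {x}) := by rw [Iio_union_right]
  _ ≤ nu (Iio x) + nu {x} := measure_union_le _ _
  _ = nu (Iio x) := by rw [nu_singleton]; ring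

lemma nu_Ici {v : ℝ} (hv : 0 ≤ v) : nu (Ici v) = ENNReal.ofReal (Real.exp (-v)) := by
  rw [← compl_Iio, measure_compl measurableSet_Iio (measure_ne_top _ _), nu_Iio, nu_Iic,
    if_pos hv, measure_univ]
  rw [show (1 : ℝ≥0∞) = ENNReal.ofReal (1:ℝ) by simp]
  rw [← ENNReal.ofReal_sub _ (by nlinarith [Real.exp_le_one_iff.2 (by linarith : -v ≤ 0)])]
  congr 1
  ring

lemma nu_Icc {v : ℝ} (hv : 0 ≤ v) :
    nu (Icc v (v+1)) = ENNReal.ofReal (1 - Real.exp (-1)) * nu (Ici v) := by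
  have hsub : Iio v ⊆ Iic (v+1) := fun y (hy : y < v) => (by linarith : y ≤ v + 1)
  have hset : Icc v (v+1) = Iic (v+1) \ Iio v := by
    ext y
    simp only [mem_Icc, mem_diff, mem_Iic, mem_Iio, not_lt]
    tauto
  rw [hset, measure_diff hsub measurableSet_Iio.nullMeasurableSet (measure_ne_top _ _),
    nu_Iio, nu_Iic, nu_Iic, nu_Ici hv, if_pos (by linarith : (0:ℝ) ≤ v + 1), if_pos hv]
  rw [← ENNReal.ofReal_sub _ (by nlinarith [Real.exp_pos (-v), Real.exp_le_one_iff.2 (by linarith : -v ≤ 0)])]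
  rw [← ENNReal.ofReal_mul (by nlinarith [Real.exp_pos (-1), Real.exp_le_one_iff.2 (by norm_num : -(1:ℝ) ≤ 0)])]
  congr 1
  have : Real.exp (-(v+1)) = Real.exp (-v) * Real.exp (-1) := by
    rw [← Real.exp_add]; ring_nf
  rw [this]; ring

lemma nu_Iic_zero : nu (Iic 0) = 0 := by
  rw [nu_Iic]; simp

end NuFacts

end AnnouncedAux


open AnnouncedAux Set ENNReal in
/-- Example 2.14: the jump times `S n` of a unit-rate Poisson process
(partial sums of i.i.d. standard exponential interarrival times `e`), independent
i.i.d. standard exponential delays `s`, announced times `U n = S n + s n`, an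
independent standard exponential threshold `Θ`, and
`τ = inf {t ≥ 0 : t + Σ_{U n ≤ t} 1 ≥ Θ}`.  Then `P(τ = t) = 0` for every
deterministic `t ≥ 0`, yet `P(τ = U n | S n, s n, τ ≥ U n) = 1 - e⁻¹`. -/
theorem announced_random_risky_times
    {Ω : Type*} [m0 : MeasurableSpace Ω] (P : Measure Ω) [IsProbabilityMeasure P]
    (e s : ℕ → Ω → ℝ) (Θ : Ω → ℝ)
    (he : ∀ n, Measurable (e n)) (hs : ∀ n, Measurable (s n)) (hΘ : Measurable Θ)
    (Z : (ℕ ⊕ ℕ ⊕ Unit) → Ω → ℝ)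
    (hZ : ∀ j, Z j = Sum.elim e (Sum.elim s (fun _ => Θ)) j)
    (hindep : iIndepFun (m := fun _ => borel ℝ) Z P)
    (hlaw : ∀ j, P.map (Z j) = expMeasure 1)
    (S U : ℕ → Ω → ℝ)
    (hS : ∀ n ω, S n ω = ∑ k ∈ Finset.range (n + 1), e k ω)
    (hU : ∀ n ω, U n ω = S n ω + s n ω)
    (Λ : ℝ → Ω → ℝ)
    (hΛ : ∀ t ω, Λ t ω = t + ∑' n : ℕ, (if U n ω ≤ t then (1:ℝ) else 0))
    (τ : Ω → ℝ)
    (hτ : ∀ ω, τ ω = sInf {t : ℝ | 0 ≤ t ∧ Θ ω ≤ Λ t ω}) :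
    (∀ t : ℝ, 0 ≤ t → P {ω | τ ω = t} = 0) ∧
    (∀ n : ℕ,
      (P[|{ω | U n ω ≤ τ ω}])[Set.indicator {ω | τ ω = U n ω} (fun _ => (1:ℝ)) |
          MeasurableSpace.comap (fun ω => (S n ω, s n ω)) inferInstance]
        =ᵐ[P[|{ω | U n ω ≤ τ ω}]] fun _ => 1 - Real.exp (-1)) := by
  classical
  -- basic measurability and law facts
  have hZval : ∀ j, Z j = Sum.elim e (Sum.elim s (fun _ => Θ)) j := hZ
  have hZe : ∀ k, Z (Sum.inl k) = e k := fun k => hZ _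
  have hZs : ∀ k, Z (Sum.inr (Sum.inl k)) = s k := fun k => hZ _
  have hZΘ : Z (Sum.inr (Sum.inr ())) = Θ := hZ _
  have hZmeas : ∀ j, Measurable (Z j) := by
    intro j
    rw [hZ]
    rcases j with k | k | u
    · exact he k
    · exact hs k
    · exact hΘ
  have hlawν : ∀ j, P.map (Z j) = nu := fun j => hlaw j
  have hlawB : ∀ j (B : Set ℝ), MeasurableSet B → P (Z j ⁻¹' B) = nu B := by
    intro j B hB
    rw [← Measure.map_apply (hZmeas j) hB, hlawν j]
  have hSmeas : ∀ k, Measurable (S k) := by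
    intro k
    have : S k = fun ω => ∑ i ∈ Finset.range (k+1), e i ω := funext (hS k)
    rw [this]
    exact Finset.measurable_sum _ (fun i _ => he i)
  have hUmeas : ∀ k, Measurable (U k) := by
    intro k
    have : U k = fun ω => S k ω + s k ω := funext (hU k)
    rw [this]
    exact (hSmeas k).add (hs k)
  -- the independence sigma-algebras
  set m1 : (ℕ ⊕ ℕ ⊕ Unit) → MeasurableSpace Ω := fun j₀ =>
    ⨆ j ∈ ({j₀}ᶜ : Set (ℕ ⊕ ℕ ⊕ Unit)), MeasurableSpace.comap (Z j) (borel ℝ) with hm1def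
  have h_le : ∀ j, MeasurableSpace.comap (Z j) (borel ℝ) ≤ m0 := by
    intro j
    exact measurable_iff_comap_le.1 (hZmeas j)
  have hm1le : ∀ j₀, m1 j₀ ≤ m0 := by
    intro j₀
    exact iSup₂_le (fun j _ => h_le j)
  have hmeasm1 : ∀ j₀ j, j ≠ j₀ → Measurable[m1 j₀] (Z j) := by
    intro j₀ j hj
    apply measurable_iff_comap_le.2
    exact le_iSup₂ (f := fun (j : ℕ ⊕ ℕ ⊕ Unit) (_ : j ∈ ({j₀}ᶜ : Set (ℕ ⊕ ℕ ⊕ Unit))) =>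
      MeasurableSpace.comap (Z j) (borel ℝ)) j hj
  have hIndep1 : ∀ j₀, Indep (m1 j₀) (MeasurableSpace.comap (Z j₀) (borel ℝ)) P := by
    intro j₀
    have h := indep_biSup_compl h_le ((iIndepFun_iff_iIndep _ _ _).1 hindep) ({j₀}ᶜ)
    rw [compl_compl] at h
    have hsing : (⨆ j ∈ ({j₀} : Set (ℕ ⊕ ℕ ⊕ Unit)), MeasurableSpace.comap (Z j) (borel ℝ))
        = MeasurableSpace.comap (Z j₀) (borel ℝ) := by
      simp
    rw [hsing] at h
    exact h
  have hIndepFun : ∀ j₀ {α : Type} [MeasurableSpace α] (Y : Ω → α),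
      Measurable[m1 j₀] Y → IndepFun Y (Z j₀) P := by
    intro j₀ α mα Y hY
    rw [IndepFun_iff_Indep]
    exact indep_of_indep_of_le_left (hIndep1 j₀)
      (measurable_iff_comap_le.1 hY)
  -- measurability of building blocks w.r.t. m1 j₀
  have hem1 : ∀ j₀ k, Sum.inl k ≠ j₀ → Measurable[m1 j₀] (e k) := by
    intro j₀ k hk
    rw [← hZe k]
    exact hmeasm1 j₀ _ hk
  have hsm1 : ∀ j₀ k, Sum.inr (Sum.inl k) ≠ j₀ → Measurable[m1 j₀] (s k) := by
    intro j₀ k hk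
    rw [← hZs k]
    exact hmeasm1 j₀ _ hk
  have hSm1 : ∀ j₀ k, (∀ i, Sum.inl i ≠ j₀) → Measurable[m1 j₀] (S k) := by
    intro j₀ k h
    have : S k = fun ω => ∑ i ∈ Finset.range (k+1), e i ω := funext (hS k)
    rw [this]
    exact Finset.measurable_sum _ (fun i _ => hem1 j₀ i (h i))
  have hUm1 : ∀ j₀ k, (∀ i, Sum.inl i ≠ j₀) → Sum.inr (Sum.inl k) ≠ j₀ →
      Measurable[m1 j₀] (U k) := by
    intro j₀ k h hk
    have : U k = fun ω => S k ω + s k ω := funext (hU k)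
    rw [this]
    exact Measurable.add (hSm1 j₀ k h) (hsm1 j₀ k hk)
  -- null events
  have hpos_null : ∀ j, P {ω | Z j ω ≤ 0} = 0 := by
    intro j
    have : {ω | Z j ω ≤ 0} = Z j ⁻¹' (Iic 0) := rfl
    rw [this, hlawB j _ measurableSet_Iic, nu_Iic_zero]
  have hUt_null : ∀ (k : ℕ) (t : ℝ), P {ω | U k ω = t} = 0 := by
    intro k t
    set j₀ : ℕ ⊕ ℕ ⊕ Unit := Sum.inr (Sum.inl k) with hj₀
    set Y : Ω → ℝ := fun ω => t - S k ω with hY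
    have hYm1 : Measurable[m1 j₀] Y :=
      Measurable.sub measurable_const (hSm1 j₀ k (fun i => by simp [hj₀]))
    have hseteq : {ω | U k ω = t} = {ω | Y ω = Z j₀ ω} := by
      ext ω
      simp only [Set.mem_setOf_eq, hY, hj₀, hZs k, hU k ω]
      constructor <;> intro h <;> linarith
    rw [hseteq]
    exact measure_eq_null_of_indep (hIndepFun j₀ Y hYm1) (hZmeas j₀)
      ((hYm1.mono (hm1le j₀) le_rfl)) (hlawν j₀) nu_singleton
  have hUU_null : ∀ (k m : ℕ), k ≠ m → P {ω | U k ω = U m ω} = 0 := by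
    intro k m hkm
    set j₀ : ℕ ⊕ ℕ ⊕ Unit := Sum.inr (Sum.inl k) with hj₀
    set Y : Ω → ℝ := fun ω => U m ω - S k ω with hY
    have hYm1 : Measurable[m1 j₀] Y := by
      apply Measurable.sub
      · exact hUm1 j₀ m (fun i => by simp [hj₀]) (by simp [hj₀, hkm, Ne.symm hkm])
      · exact hSm1 j₀ k (fun i => by simp [hj₀])
    have hseteq : {ω | U k ω = U m ω} = {ω | Y ω = Z j₀ ω} := by
      ext ω
      simp only [Set.mem_setOf_eq, hY, hj₀, hZs k, hU k ω]
      constructor <;> intro h <;> linarith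
    rw [hseteq]
    exact measure_eq_null_of_indep (hIndepFun j₀ Y hYm1) (hZmeas j₀)
      ((hYm1.mono (hm1le j₀) le_rfl)) (hlawν j₀) nu_singleton
  set jΘ : ℕ ⊕ ℕ ⊕ Unit := Sum.inr (Sum.inr ()) with hjΘ
  have hinlΘ : ∀ i : ℕ, Sum.inl i ≠ jΘ := fun i => by simp [hjΘ]
  have hinrΘ : ∀ i : ℕ, Sum.inr (Sum.inl i) ≠ jΘ := fun i => by simp [hjΘ]
  have hΛm1 : ∀ t : ℝ, Measurable[m1 jΘ] (Λ t) := by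
    intro t
    have : Λ t = fun ω => t + ∑' m : ℕ, (if U m ω ≤ t then (1:ℝ) else 0) := funext (hΛ t)
    rw [this]
    apply Measurable.add measurable_const
    apply measurable_tsum_ind
    intro m
    exact measurableSet_le (hUm1 jΘ m hinlΘ (hinrΘ m)) measurable_const
  have hΘΛ_null : ∀ t : ℝ, P {ω | Θ ω = Λ t ω} = 0 := by
    intro t
    have hseteq : {ω | Θ ω = Λ t ω} = {ω | Λ t ω = Z jΘ ω} := by
      ext ω
      simp only [Set.mem_setOf_eq, hjΘ, hZΘ]
      exact eq_comm.trans (iff_of_eq (congrArg (fun x => Λ t ω = x) (congrFun hZΘ ω).symm))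
    rw [hseteq]
    exact measure_eq_null_of_indep (hIndepFun jΘ (Λ t) (hΛm1 t)) (hZmeas jΘ)
      (((hΛm1 t).mono (hm1le jΘ) le_rfl)) (hlawν jΘ) nu_singleton
  -- the product bound for G2
  have hBN : ∀ N : ℕ, P {ω | ∀ k, e k ω ≤ (N:ℝ)} = 0 := by
    intro N
    set q : ℝ≥0∞ := nu (Iic (N:ℝ)) with hq
    have hq1 : q < 1 := by
      rw [hq, nu_Iic, if_pos (by positivity)]
      calc ENNReal.ofReal (1 - Real.exp (-(N:ℝ))) < ENNReal.ofReal 1 := by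
            rw [ENNReal.ofReal_lt_ofReal_iff one_pos]
            nlinarith [Real.exp_pos (-(N:ℝ))]
      _ = 1 := ENNReal.ofReal_one
    have hbound : ∀ K : ℕ, P {ω | ∀ k, e k ω ≤ (N:ℝ)} ≤ q ^ K := by
      intro K
      set Fk : Finset (ℕ ⊕ ℕ ⊕ Unit) :=
        (Finset.range K).map ⟨Sum.inl, Sum.inl_injective⟩ with hFk
      have hsub : {ω | ∀ k, e k ω ≤ (N:ℝ)} ⊆ ⋂ j ∈ Fk, Z j ⁻¹' (Iic (N:ℝ)) := by
        intro ω hω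
        simp only [Set.mem_iInter]
        intro j hj
        rw [hFk, Finset.mem_map] at hj
        obtain ⟨k, hk, rfl⟩ := hj
        simp only [Function.Embedding.coeFn_mk, Set.mem_preimage, Set.mem_Iic, hZe k]
        exact hω k
      refine le_trans (measure_mono hsub) ?_
      rw [hindep.measure_inter_preimage_eq_mul Fk
        (sets := fun _ => Iic (N:ℝ)) (fun i _ => measurableSet_Iic)]
      rw [Finset.prod_congr rfl (fun j _ => hlawB j _ measurableSet_Iic)]
      rw [Finset.prod_const, hFk, Finset.card_map, Finset.card_range]
    have htend := ENNReal.tendsto_pow_atTop_nhds_zero_of_lt_one hq1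
    have := ge_of_tendsto' htend hbound
    exact le_antisymm this zero_le
  -- the good event
  set Good : Set Ω := {ω | (∀ j, 0 < Z j ω) ∧ (∀ N : ℕ, ∃ k, (N:ℝ) < e k ω) ∧
      (∀ k m, k ≠ m → U k ω ≠ U m ω)} with hGoodDef
  have hGoodc : P Goodᶜ = 0 := by
    have hsub : Goodᶜ ⊆ (⋃ j, {ω | Z j ω ≤ 0}) ∪
        ((⋃ N : ℕ, {ω | ∀ k, e k ω ≤ (N:ℝ)}) ∪
          (⋃ k, ⋃ m, {ω | k ≠ m ∧ U k ω = U m ω})) := by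
      intro ω hω
      simp only [hGoodDef, Set.mem_compl_iff, Set.mem_setOf_eq, not_and_or] at hω
      rcases hω with h | h | h
      · left
        push_neg at h
        obtain ⟨j, hj⟩ := h
        exact Set.mem_iUnion.2 ⟨j, hj⟩
      · right; left
        push_neg at h
        obtain ⟨N, hN⟩ := h
        exact Set.mem_iUnion.2 ⟨N, fun k => hN k⟩
      · right; right
        push_neg at h
        obtain ⟨k, m, hkm, hkm2⟩ := h
        exact Set.mem_iUnion.2 ⟨k, Set.mem_iUnion.2 ⟨m, hkm, hkm2⟩⟩
    apply measure_mono_null hsub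
    apply measure_union_null
    · exact measure_iUnion_null (fun j => hpos_null j)
    apply measure_union_null
    · exact measure_iUnion_null (fun N => hBN N)
    · apply measure_iUnion_null
      intro k
      apply measure_iUnion_null
      intro m
      by_cases hkm : k = m
      · have : {ω | k ≠ m ∧ U k ω = U m ω} = ∅ := by
          ext ω; simp [hkm]
        rw [this]; simp
      · exact measure_mono_null (fun ω hω => hω.2) (hUU_null k m hkm)
  have haeGood : ∀ᵐ ω ∂P, ω ∈ Good := by
    rw [ae_iff]
    exact hGoodc
  -- pointwise consequences of Good
  have hGpos : ∀ ω ∈ Good, (∀ k, 0 < e k ω) ∧ (∀ k, 0 < s k ω) ∧ 0 < Θ ω := by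
    intro ω hω
    refine ⟨fun k => ?_, fun k => ?_, ?_⟩
    · rw [← hZe k]; exact hω.1 _
    · rw [← hZs k]; exact hω.1 _
    · rw [← hZΘ]; exact hω.1 _
  have hGU : ∀ ω ∈ Good, ∀ m, 0 < U m ω := by
    intro ω hω m
    rw [hU m ω, hS m ω]
    have h1 : 0 < ∑ k ∈ Finset.range (m + 1), e k ω :=
      Finset.sum_pos (fun i _ => (hGpos ω hω).1 i) (by simp)
    have h2 := (hGpos ω hω).2.1 m
    linarith
  have hGfin : ∀ ω ∈ Good, ∀ t : ℝ, ({m | U m ω ≤ t}).Finite := by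
    intro ω hω t
    obtain ⟨k, hk⟩ := hω.2.1 ⌈t⌉₊
    apply Set.Finite.subset (Set.finite_Iio k)
    intro m hm
    simp only [Set.mem_setOf_eq] at hm
    simp only [Set.mem_Iio]
    by_contra hmk
    push_neg at hmk
    have h1 : e k ω ≤ S m ω := by
      rw [hS m ω]
      exact Finset.single_le_sum (f := fun i => e i ω)
        (fun i _ => ((hGpos ω hω).1 i).le) (Finset.mem_range.2 (by omega))
    have h2 : 0 < s m ω := (hGpos ω hω).2.1 m
    have h3 : t ≤ (⌈t⌉₊ : ℝ) := Nat.le_ceil t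
    have h4 := hU m ω
    linarith
  -- translation to the abstract lemmas
  have hτω : ∀ ω, τ ω = sInf (AnnouncedAux.Aset (fun m => U m ω) (Θ ω)) := by
    intro ω
    rw [hτ]
    congr 1
    ext t
    simp only [AnnouncedAux.Aset, AnnouncedAux.lam, Set.mem_setOf_eq, hΛ t ω]
  have hlamω : ∀ t ω, AnnouncedAux.lam (fun m => U m ω) t = Λ t ω := by
    intro t ω
    rw [hΛ t ω, AnnouncedAux.lam]
  -- Part 1
  have part1 : ∀ t : ℝ, 0 ≤ t → P {ω | τ ω = t} = 0 := by
    intro t ht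
    have hsub : {ω | τ ω = t} ⊆ Goodᶜ ∪ ((⋃ m, {ω | U m ω = t}) ∪ {ω | Θ ω = Λ t ω}) := by
      intro ω hω
      by_cases hg : ω ∈ Good
      · by_cases hm : ∃ m, U m ω = t
        · right; left
          obtain ⟨m, hm⟩ := hm
          exact Set.mem_iUnion.2 ⟨m, hm⟩
        · by_cases hθe : Θ ω = Λ t ω
          · right; right; exact hθe
          · exfalso
            push_neg at hm
            have hne2 : Θ ω ≠ AnnouncedAux.lam (fun m => U m ω) t := by
              rw [hlamω t ω]; exact hθe
            have := AnnouncedAux.ne_fixed (hGfin ω hg) (hGU ω hg)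
              ((hGpos ω hg).2.2) ht hm hne2
            rw [← hτω ω] at this
            exact this hω
      · left; exact hg
    apply measure_mono_null hsub
    apply measure_union_null hGoodc
    apply measure_union_null
    · exact measure_iUnion_null (fun m => hUt_null m t)
    · exact hΘΛ_null t
  refine ⟨part1, ?_⟩
  intro n
  set Vf : Ω → ℝ := fun ω => U n ω + ∑' m, (if U m ω < U n ω then (1:ℝ) else 0) with hVf
  have hVm1 : Measurable[m1 jΘ] Vf := by
    apply Measurable.add (hUm1 jΘ n hinlΘ (hinrΘ n))
    apply measurable_tsum_ind
    intro m
    exact measurableSet_lt (hUm1 jΘ m hinlΘ (hinrΘ m)) (hUm1 jΘ n hinlΘ (hinrΘ n))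
  have hVmeas : Measurable Vf := hVm1.mono (hm1le jΘ) le_rfl
  have hGfin' : ∀ ω ∈ Good, ({m | U m ω < U n ω}).Finite := fun ω hg =>
    (hGfin ω hg (U n ω)).subset (fun m (hm : U m ω < U n ω) => (le_of_lt hm : U m ω ≤ U n ω))
  have hVGood : ∀ ω (hg : ω ∈ Good), Vf ω = U n ω + (((hGfin' ω hg).toFinset.card : ℕ) : ℝ) := by
    intro ω hg
    simp only [hVf]
    rw [AnnouncedAux.tsum_ite_eq_card (hGfin' ω hg)]
    rfl
  have hVnonneg : ∀ ω ∈ Good, 0 ≤ Vf ω := by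
    intro ω hg
    rw [hVGood ω hg]
    have := hGU ω hg n
    exact add_nonneg this.le (Nat.cast_nonneg _)
  have hE1 : ∀ ω ∈ Good, (U n ω ≤ τ ω ↔ Vf ω ≤ Θ ω) := by
    intro ω hg
    rw [hτω ω, hVGood ω hg]
    exact AnnouncedAux.ge_iff (hGfin ω hg) (hGU ω hg n) (hGfin' ω hg)
  have hE2 : ∀ ω ∈ Good, (τ ω = U n ω ↔ (Vf ω ≤ Θ ω ∧ Θ ω ≤ Vf ω + 1)) := by
    intro ω hg
    rw [hτω ω, hVGood ω hg]
    have hdist : ∀ m, m ≠ n → U m ω ≠ U n ω := fun m hm => hg.2.2 m n hm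
    exact AnnouncedAux.eq_iff (θ := Θ ω) (hGfin ω hg) (hGU ω hg n) hdist (hGfin' ω hg)
  set B : Set Ω := {ω | U n ω ≤ τ ω} with hBdef
  set T : Set Ω := {ω | τ ω = U n ω} with hTdef
  set C2e : Set Ω := {ω | Vf ω ≤ Θ ω} with hC2edef
  set C1e : Set Ω := {ω | Vf ω ≤ Θ ω ∧ Θ ω ≤ Vf ω + 1} with hC1edef
  have hC1meas : MeasurableSet C1e :=
    (measurableSet_le hVmeas hΘ).inter (measurableSet_le hΘ (hVmeas.add measurable_const))
  have hcongr : ∀ (X Y : Set Ω), (∀ ω ∈ Good, (ω ∈ X ↔ ω ∈ Y)) → P X = P Y := by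
    intro X Y h
    apply measure_congr
    rw [Filter.eventuallyEq_set]
    filter_upwards [haeGood] with ω hg using h ω hg
  set Wp : Ω → ℝ × ℝ × ℝ := fun ω => (Vf ω, S n ω, s n ω) with hWpdef
  have hWpm1 : Measurable[m1 jΘ] Wp :=
    Measurable.prodMk hVm1 (Measurable.prodMk (hSm1 jΘ n hinlΘ) (hsm1 jΘ n (hinrΘ n)))
  have hWpmeas : Measurable Wp := hWpm1.mono (hm1le jΘ) le_rfl
  have hWIndep : IndepFun Wp Θ P := by
    have := hIndepFun jΘ Wp hWpm1
    rwa [hZΘ] at this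
  have hΘlaw : P.map Θ = nu := by rw [← hZΘ]; exact hlawν jΘ
  have hKEY : ∀ C : Set ((ℝ × ℝ × ℝ) × ℝ), MeasurableSet C →
      P {ω | (Wp ω, Θ ω) ∈ C} = ∫⁻ ω, nu (Prod.mk (Wp ω) ⁻¹' C) ∂P :=
    fun C hC => measure_pair_mem_eq_lintegral hWIndep hWpmeas hΘ hΘlaw hC
  set c₀ : ℝ≥0∞ := ENNReal.ofReal (1 - Real.exp (-1)) with hc₀
  have hc₀top : c₀ ≠ ⊤ := ENNReal.ofReal_ne_top
  have hMAIN : ∀ E : Set (ℝ × ℝ), MeasurableSet E →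
      P (C1e ∩ ((fun ω => (S n ω, s n ω)) ⁻¹' E)) =
        c₀ * P (C2e ∩ ((fun ω => (S n ω, s n ω)) ⁻¹' E)) := by
    intro E hE
    set Apre : Set Ω := (fun ω => (S n ω, s n ω)) ⁻¹' E with hApre
    set C1 : Set ((ℝ × ℝ × ℝ) × ℝ) := {p | (p.1.1 ≤ p.2 ∧ p.2 ≤ p.1.1 + 1) ∧ p.1.2 ∈ E} with hC1
    set C2 : Set ((ℝ × ℝ × ℝ) × ℝ) := {p | p.1.1 ≤ p.2 ∧ p.1.2 ∈ E} with hC2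
    have hm11 : Measurable fun p : (ℝ × ℝ × ℝ) × ℝ => p.1.1 := measurable_fst.fst
    have hm12 : Measurable fun p : (ℝ × ℝ × ℝ) × ℝ => p.1.2 := measurable_fst.snd
    have hC2m : MeasurableSet C2 := (measurableSet_le hm11 measurable_snd).inter (hm12 hE)
    have hC1m : MeasurableSet C1 := ((measurableSet_le hm11 measurable_snd).inter
      (measurableSet_le measurable_snd (hm11.add measurable_const))).inter (hm12 hE)
    have hev1 : {ω | (Wp ω, Θ ω) ∈ C1} = C1e ∩ Apre := by
      ext ω
      simp only [hC1, hWpdef, Set.mem_setOf_eq, Set.mem_inter_iff, Set.mem_preimage,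
        hC1edef, hApre]
    have hev2 : {ω | (Wp ω, Θ ω) ∈ C2} = C2e ∩ Apre := by
      ext ω
      simp only [hC2, hWpdef, Set.mem_setOf_eq, Set.mem_inter_iff, Set.mem_preimage,
        hC2edef, hApre]
    have hslice1 : ∀ ω, nu (Prod.mk (Wp ω) ⁻¹' C1) =
        Set.indicator Apre (fun ω => nu (Icc (Vf ω) (Vf ω + 1))) ω := by
      intro ω
      by_cases hmem : ω ∈ Apre
      · rw [Set.indicator_of_mem hmem]
        congr 1
        ext θ'
        have hmem' : (S n ω, s n ω) ∈ E := hmem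
        simp [hC1, hWpdef, hmem', Set.mem_Icc]
      · rw [Set.indicator_of_notMem hmem]
        have hmem' : (S n ω, s n ω) ∉ E := hmem
        have : Prod.mk (Wp ω) ⁻¹' C1 = ∅ := by
          ext θ'; simp [hC1, hWpdef, hmem']
        rw [this]; simp
    have hslice2 : ∀ ω, nu (Prod.mk (Wp ω) ⁻¹' C2) =
        Set.indicator Apre (fun ω => nu (Ici (Vf ω))) ω := by
      intro ω
      by_cases hmem : ω ∈ Apre
      · rw [Set.indicator_of_mem hmem]
        congr 1
        ext θ'
        have hmem' : (S n ω, s n ω) ∈ E := hmem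
        simp [hC2, hWpdef, hmem', Set.mem_Ici]
      · rw [Set.indicator_of_notMem hmem]
        have hmem' : (S n ω, s n ω) ∉ E := hmem
        have : Prod.mk (Wp ω) ⁻¹' C2 = ∅ := by
          ext θ'; simp [hC2, hWpdef, hmem']
        rw [this]; simp
    rw [← hev1, ← hev2, hKEY C1 hC1m, hKEY C2 hC2m]
    calc ∫⁻ ω, nu (Prod.mk (Wp ω) ⁻¹' C1) ∂P
        = ∫⁻ ω, c₀ * Set.indicator Apre (fun ω => nu (Ici (Vf ω))) ω ∂P := by
          apply lintegral_congr_ae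
          filter_upwards [haeGood] with ω hg
          rw [hslice1 ω]
          by_cases hmem : ω ∈ Apre
          · rw [Set.indicator_of_mem hmem, Set.indicator_of_mem hmem,
              nu_Icc (hVnonneg ω hg)]
          · rw [Set.indicator_of_notMem hmem, Set.indicator_of_notMem hmem, mul_zero]
      _ = c₀ * ∫⁻ ω, Set.indicator Apre (fun ω => nu (Ici (Vf ω))) ω ∂P :=
          lintegral_const_mul' _ _ hc₀top
      _ = c₀ * ∫⁻ ω, nu (Prod.mk (Wp ω) ⁻¹' C2) ∂P := by
          congr 1
          exact lintegral_congr (fun ω => (hslice2 ω).symm)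
  -- conditional expectation step
  have hmle : MeasurableSpace.comap (fun ω => (S n ω, s n ω)) inferInstance ≤ m0 :=
    measurable_iff_comap_le.1 ((hSmeas n).prodMk (hs n))
  by_cases hPB0 : P B = 0
  · have hzero : P[|B] = 0 := by
      rw [ProbabilityTheory.cond, Measure.restrict_eq_zero.2 hPB0, smul_zero]
    rw [hzero]
    simp [Filter.EventuallyEq, ae_zero]
  · haveI hPprob : IsProbabilityMeasure (P[|B]) := cond_isProbabilityMeasure hPB0
    have hμ'ac : P[|B] ≪ P := cond_absolutelyContinuous
    have hfP : Set.indicator T (fun _ => (1:ℝ)) =ᵐ[P] Set.indicator C1e (fun _ => (1:ℝ)) := by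
      filter_upwards [haeGood] with ω hg
      by_cases hmem : ω ∈ T
      · rw [Set.indicator_of_mem hmem,
          Set.indicator_of_mem (show ω ∈ C1e from (hE2 ω hg).1 hmem)]
      · rw [Set.indicator_of_notMem hmem,
          Set.indicator_of_notMem (show ω ∉ C1e from fun hc => hmem ((hE2 ω hg).2 hc))]
    have hfae : Set.indicator T (fun _ => (1:ℝ)) =ᵐ[P[|B]] Set.indicator C1e (fun _ => (1:ℝ)) :=
      hfP.filter_mono hμ'ac.ae_le
    have hf : Integrable (Set.indicator T (fun _ => (1:ℝ))) (P[|B]) :=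
      ((integrable_const (1:ℝ)).indicator hC1meas).congr hfae.symm
    refine (ae_eq_condExp_of_forall_setIntegral_eq hmle hf ?_ ?_ ?_).symm
    · intro A hA hAfin
      exact (integrable_const _).integrableOn
    · intro A hA hAfin
      obtain ⟨E, hE, hAE⟩ := hA
      have hAmeas : MeasurableSet A := hmle A ⟨E, hE, hAE⟩
      rw [setIntegral_const]
      have hRHS : ∫ x in A, Set.indicator T (fun _ => (1:ℝ)) x ∂(P[|B])
          = ((P[|B]) (C1e ∩ A)).toReal := by
        rw [setIntegral_congr_ae hAmeas (hfae.mono (fun ω hω _ => hω))]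
        rw [setIntegral_indicator hC1meas, setIntegral_const, smul_eq_mul, mul_one]
        congr 1
        rw [Set.inter_comm]
      rw [hRHS]
      have h1 : (P[|B]) A = (P B)⁻¹ * P (B ∩ A) := cond_apply' hAmeas P
      have h2 : (P[|B]) (C1e ∩ A) = (P B)⁻¹ * P (B ∩ (C1e ∩ A)) :=
        cond_apply' (hC1meas.inter hAmeas) P
      have h3 : P (B ∩ (C1e ∩ A)) = P (C1e ∩ A) := by
        apply hcongr
        intro ω hg
        simp only [Set.mem_inter_iff, hBdef, Set.mem_setOf_eq]
        constructor
        · rintro ⟨_, h⟩; exact h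
        · rintro ⟨h1', h2'⟩
          refine ⟨?_, h1', h2'⟩
          have hτeq : τ ω = U n ω := (hE2 ω hg).2 h1'
          show U n ω ≤ τ ω
          rw [hτeq]
      have h4 : P (C1e ∩ A) = c₀ * P (C2e ∩ A) := by
        rw [← hAE]
        exact hMAIN E hE
      have h5 : P (B ∩ A) = P (C2e ∩ A) := by
        apply hcongr
        intro ω hg
        simp only [Set.mem_inter_iff]
        constructor
        · rintro ⟨h1', h2'⟩
          exact ⟨(hE1 ω hg).1 h1', h2'⟩
        · rintro ⟨h1', h2'⟩
          exact ⟨(hE1 ω hg).2 h1', h2'⟩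
      rw [measureReal_def, h1, h2, h3, h4, h5, smul_eq_mul]
      rw [ENNReal.toReal_mul, ENNReal.toReal_mul, ENNReal.toReal_mul]
      rw [hc₀, ENNReal.toReal_ofReal
        (by nlinarith [Real.exp_le_one_iff.2 (by norm_num : -(1:ℝ) ≤ 0)] : (0:ℝ) ≤ 1 - Real.exp (-1))]
      ring
    · exact StronglyMeasurable.aestronglyMeasurable
        (@stronglyMeasurable_const _ _ (MeasurableSpace.comap (fun ω => (S n ω, s n ω)) inferInstance) _ _)
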